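/- (Theorem 2, part 2: spinor transformation of the second (conjugate) equation.) Let D, D* ⊆ ℂ be open, let z : D* → D be holomorphic on D* with z'(ζ) ≠ 0 for all ζ ∈ D*, and let s : D* → ℂ be holomorphic on D* with s(ζ)² = z'(ζ) for all ζ ∈ D*. Let u : ℂ → ℂ and let ψ⁺ be real-differentiable on D with ∂_z̄ ψ⁺ = −conj(u)·conj(ψ⁺) on D. Define u*(ζ) = u(z(ζ))·|z'(ζ)| and ψ⁺*(ζ) = ψ⁺(z(ζ))·s(ζ) for ζ ∈ D*. Then ∂_ζ̄ ψ⁺* = −conj(u*)·conj(ψ⁺*) on D*. -/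

import Mathlib

open Complex

/-- The Wirtinger derivative ∂_z̄ f(z) = (1/2)((fderiv ℝ f z) 1 + i·((fderiv ℝ f z) i)). -/
noncomputable def dzbar (f : ℂ → ℂ) (z : ℂ) : ℂ :=
  (1 / 2 : ℂ) * ((fderiv ℝ f z) 1 + Complex.I * (fderiv ℝ f z) Complex.I)

/-- The Wirtinger derivative ∂_z f(z) = (1/2)((fderiv ℝ f z) 1 − i·((fderiv ℝ f z) i)). -/
noncomputable def dz (f : ℂ → ℂ) (z : ℂ) : ℂ :=
  (1 / 2 : ℂ) * ((fderiv ℝ f z) 1 - Complex.I * (fderiv ℝ f z) Complex.I)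

lemma rlin_apply (L : ℂ →L[ℝ] ℂ) (c : ℂ) :
    L c = (c.re : ℂ) * L 1 + (c.im : ℂ) * L Complex.I := by
  have h : c = c.re • (1 : ℂ) + c.im • Complex.I := by
    simp [Complex.ext_iff]
  rw [h, map_add, map_smul, map_smul]
  simp [Complex.real_smul]

/-- Theorem 2, part 2: if ∂_z̄ ψ⁺ = −conj u·conj ψ⁺ on D, then
ψ⁺*(ζ) = ψ⁺(z(ζ))·s(ζ) satisfies ∂_ζ̄ ψ⁺* = −conj u*·conj ψ⁺* with
u*(ζ) = u(z(ζ))·|z'(ζ)|. -/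
theorem statement9 (D Dstar : Set ℂ) (hD : IsOpen D) (hDstar : IsOpen Dstar)
    (z z' s : ℂ → ℂ) (hmaps : Set.MapsTo z Dstar D)
    (hz : ∀ ζ ∈ Dstar, HasDerivAt z (z' ζ) ζ)
    (hz' : ∀ ζ ∈ Dstar, z' ζ ≠ 0)
    (hs : ∀ ζ ∈ Dstar, DifferentiableAt ℂ s ζ)
    (hs2 : ∀ ζ ∈ Dstar, s ζ ^ 2 = z' ζ)
    (u ψp : ℂ → ℂ)
    (hψp : ∀ w ∈ D, DifferentiableAt ℝ ψp w)
    (heq : ∀ w ∈ D, dzbar ψp w = -(starRingEnd ℂ) (u w) * (starRingEnd ℂ) (ψp w)) :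
    ∀ ζ ∈ Dstar,
      dzbar (fun ξ => ψp (z ξ) * s ξ) ζ
        = -(starRingEnd ℂ) (u (z ζ) * (‖z' ζ‖ : ℂ))
            * (starRingEnd ℂ) (ψp (z ζ) * s ζ) := by
  intro ζ hζ
  set w := z ζ with hw
  have hwD : w ∈ D := hmaps hζ
  have hψw : DifferentiableAt ℝ ψp w := hψp w hwD
  set L := fderiv ℝ ψp w with hL
  -- derivative of z as a real fderiv
  have h1 : HasFDerivAt z
      (((ContinuousLinearMap.id ℂ ℂ).smulRight (z' ζ)).restrictScalars ℝ) ζ :=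
    ((hz ζ hζ).hasFDerivAt).restrictScalars ℝ
  have h2 : HasFDerivAt ψp L w := hψw.hasFDerivAt
  have h3 := h2.comp ζ h1
  set s' := deriv s ζ with hs'
  have h4 : HasFDerivAt s
      (((ContinuousLinearMap.id ℂ ℂ).smulRight s').restrictScalars ℝ) ζ :=
    (((hs ζ hζ).hasDerivAt).hasFDerivAt).restrictScalars ℝ
  have h5 := h3.mul h4
  have hF := h5.fderiv
  have hval : ∀ v : ℂ, (fderiv ℝ (fun ξ => ψp (z ξ) * s ξ) ζ) v
      = ψp w * (v * s') + s ζ * L (v * z' ζ) := by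
    intro v
    have hfun : (fun ξ => ψp (z ξ) * s ξ) = (ψp ∘ z * s) := rfl
    rw [hfun, hF]
    simp [ContinuousLinearMap.smulRight_apply, smul_eq_mul, mul_comm, hw]
  have hA := hval 1
  have hB := hval Complex.I
  have hdz : dzbar (fun ξ => ψp (z ξ) * s ξ) ζ
      = s ζ * ((starRingEnd ℂ) (z' ζ)) * dzbar ψp w := by
    rw [dzbar, hA, hB, rlin_apply L (1 * z' ζ), rlin_apply L (Complex.I * z' ζ), dzbar]
    simp only [one_mul]
    have h6 : (Complex.I * z' ζ).re = -(z' ζ).im := by simp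
    have h7 : (Complex.I * z' ζ).im = (z' ζ).re := by simp
    rw [h6, h7]
    have h8 : (starRingEnd ℂ) (z' ζ) = ((z' ζ).re : ℂ) - (z' ζ).im * Complex.I := by
      simp [Complex.ext_iff]
    rw [h8]
    push_cast
    ring_nf
    rw [Complex.I_sq]
    ring
  rw [hdz, heq w hwD]
  -- remaining algebraic identity: s ζ * conj (z' ζ) = |z' ζ| * conj (s ζ)
  have hkey : s ζ * (starRingEnd ℂ) (z' ζ) = (‖z' ζ‖ : ℂ) * (starRingEnd ℂ) (s ζ) := by
    rw [← hs2 ζ hζ, map_pow]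
    have habs : ((‖s ζ‖ : ℂ))^2 = s ζ * (starRingEnd ℂ) (s ζ) := by
      rw [Complex.mul_conj]
      norm_cast
      exact Complex.sq_norm _
    rw [norm_pow]
    push_cast
    rw [habs]
    ring
  simp only [map_mul, Complex.conj_ofReal]
  linear_combination (-(starRingEnd ℂ) (u w) * (starRingEnd ℂ) (ψp w)) * hkey
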